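/- arXiv:1712.02130 — 2 statements merged into one kernel-verified Lean document; each statement's English description precedes it below -/
import Mathlib

section
/- There is an absolute constant C with the following property: for every continuously differentiable real-valued function u on an open subset of ℝ^{1+2} and every point (t,x) in its domain with t≥0, one has |t−|x||·|∂u(t,x)| ≤ C ( |∂_t u| + |∂₁u| + |∂₂u| + |Ωu| + |L₁u| + |L₂u| + |Su| )(t,x), where |∂u| denotes the Euclidean norm of (∂_t u, ∂₁u, ∂₂u). -/
noncomputable section

open MeasureTheory Real Set

/-- Partial derivative in coordinate direction `i` on space-time `ℝ³`
(coordinate `0` is time, coordinates `1, 2` are space). -/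
def pd (i : Fin 3) (u : (Fin 3 → ℝ) → ℝ) : (Fin 3 → ℝ) → ℝ :=
  fun X => fderiv ℝ u X (Pi.single i 1)

/-- The d'Alembertian `□ = ∂_t² - ∂₁² - ∂₂²`. -/
def box (u : (Fin 3 → ℝ) → ℝ) : (Fin 3 → ℝ) → ℝ :=
  fun X => pd 0 (pd 0 u) X - pd 1 (pd 1 u) X - pd 2 (pd 2 u) X

/-- The seven Klainerman vector fields `Γ = (∂_t, ∂₁, ∂₂, Ω, L₁, L₂, S̃)`. -/
def Gamma (i : Fin 7) (u : (Fin 3 → ℝ) → ℝ) : (Fin 3 → ℝ) → ℝ :=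
  if i = 0 then pd 0 u
  else if i = 1 then pd 1 u
  else if i = 2 then pd 2 u
  else if i = 3 then fun X => -(X 2) * pd 1 u X + X 1 * pd 2 u X
  else if i = 4 then fun X => X 0 * pd 1 u X + X 1 * pd 0 u X
  else if i = 5 then fun X => X 0 * pd 2 u X + X 2 * pd 0 u X
  else fun X => X 0 * pd 0 u X + X 1 * pd 1 u X + X 2 * pd 2 u X - 2 * u X

/-- `Γ^a` for a multi-index `a = (a₁,…,a₇) ∈ ℕ⁷`. -/
def GammaPow (a : Fin 7 → ℕ) (u : (Fin 3 → ℝ) → ℝ) : (Fin 3 → ℝ) → ℝ :=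
  (Gamma 0)^[a 0] <| (Gamma 1)^[a 1] <| (Gamma 2)^[a 2] <| (Gamma 3)^[a 3] <|
    (Gamma 4)^[a 4] <| (Gamma 5)^[a 5] <| (Gamma 6)^[a 6] u

/-- The point `(t, x) ∈ ℝ^{1+2}`. -/
def pt (t : ℝ) (x : ℝ × ℝ) : Fin 3 → ℝ := ![t, x.1, x.2]

/-- `|∂v|²` at a point. -/
def pdSq (v : (Fin 3 → ℝ) → ℝ) (X : Fin 3 → ℝ) : ℝ :=
  (pd 0 v X) ^ 2 + (pd 1 v X) ^ 2 + (pd 2 v X) ^ 2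

/-- The spatial radius `r = |x|` of a space-time point. -/
def rad (X : Fin 3 → ℝ) : ℝ := Real.sqrt ((X 1) ^ 2 + (X 2) ^ 2)

/-- Multi-indices `a ∈ ℕ⁷` with `|a| ≤ k`. -/
def multiIndex7 (k : ℕ) : Finset (Fin 7 → ℕ) :=
  (Fintype.piFinset fun _ => Finset.range (k + 1)).filter fun a => ∑ i, a i ≤ k

/-- The generalized energy `E_k(u(t)) = (1/2) ∑_{|a| ≤ k-1} ∫ |∂Γ^a u|² dx`. -/
def energy (k : ℕ) (u : (Fin 3 → ℝ) → ℝ) (t : ℝ) : ℝ :=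
  (1 / 2) * ∑ a ∈ multiIndex7 (k - 1), ∫ x : ℝ × ℝ, pdSq (GammaPow a u) (pt t x)

/-- Partial derivatives on the plane `ℝ²`. -/
def pdx (i : Fin 2) (f : ℝ × ℝ → ℝ) : ℝ × ℝ → ℝ :=
  fun x => fderiv ℝ f x (if i = 0 then (1, 0) else (0, 1))

/-- The fields `Λ = (∂₁, ∂₂, r∂_r, Ω)` on `ℝ²`. -/
def Lam (i : Fin 4) (f : ℝ × ℝ → ℝ) : ℝ × ℝ → ℝ :=
  if i = 0 then pdx 0 f
  else if i = 1 then pdx 1 f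
  else if i = 2 then fun x => x.1 * pdx 0 f x + x.2 * pdx 1 f x
  else fun x => -x.2 * pdx 0 f x + x.1 * pdx 1 f x

/-- `Λ^a` for a multi-index `a ∈ ℕ⁴`. -/
def LamPow (a : Fin 4 → ℕ) (f : ℝ × ℝ → ℝ) : ℝ × ℝ → ℝ :=
  (Lam 0)^[a 0] <| (Lam 1)^[a 1] <| (Lam 2)^[a 2] <| (Lam 3)^[a 3] f

/-- Multi-indices `a ∈ ℕ⁴` with `|a| ≤ k`. -/
def multiIndex4 (k : ℕ) : Finset (Fin 4 → ℕ) :=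
  (Fintype.piFinset fun _ => Finset.range (k + 1)).filter fun a => ∑ i, a i ≤ k

/-- The `L²(ℝ²)` norm. -/
def L2 (f : ℝ × ℝ → ℝ) : ℝ := (eLpNorm f 2 volume).toReal

/-- `|∇f|` for a function on `ℝ²`. -/
def gradAbs (f : ℝ × ℝ → ℝ) : ℝ × ℝ → ℝ :=
  fun x => Real.sqrt ((pdx 0 f x) ^ 2 + (pdx 1 f x) ^ 2)

/-- Membership `(f, g) ∈ H^k_Λ`. -/
def MemHLam (k : ℕ) (f g : ℝ × ℝ → ℝ) : Prop :=
  ∀ a ∈ multiIndex4 (k - 1),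
    MemLp (LamPow a f) 2 (volume : Measure (ℝ × ℝ)) ∧
    MemLp (gradAbs (LamPow a f)) 2 (volume : Measure (ℝ × ℝ)) ∧
    MemLp (LamPow a g) 2 (volume : Measure (ℝ × ℝ))

/-- The norm `‖(f, g)‖_{H^k_Λ} = ∑_{|a| ≤ k-1} (‖∇Λ^a f‖_{L²} + ‖Λ^a g‖_{L²})`. -/
def HLamNorm (k : ℕ) (f g : ℝ × ℝ → ℝ) : ℝ :=
  ∑ a ∈ multiIndex4 (k - 1), (L2 (gradAbs (LamPow a f)) + L2 (LamPow a g))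

/-- The Japanese bracket `⟨t⟩ = √(1 + t²)`. -/
def jb (t : ℝ) : ℝ := Real.sqrt (1 + t ^ 2)

/-- The null condition for the coefficients `N_{αβμν}`. -/
def NullCond (N : Fin 3 → Fin 3 → Fin 3 → Fin 3 → ℝ) : Prop :=
  ∀ X : Fin 3 → ℝ, (X 0) ^ 2 = (X 1) ^ 2 + (X 2) ^ 2 →
    ∑ α : Fin 3, ∑ β : Fin 3, ∑ μ : Fin 3, ∑ ν : Fin 3,
      N α β μ ν * X α * X β * X μ * X ν = 0

/-- The symmetry condition `N_{αβμν} = N_{βαμν} = N_{αβνμ}`. -/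
def SymCond (N : Fin 3 → Fin 3 → Fin 3 → Fin 3 → ℝ) : Prop :=
  ∀ α β μ ν, N α β μ ν = N β α μ ν ∧ N α β μ ν = N α β ν μ

/-- The quadratic nonlinearity `N(u, v) = ∑ N_{αβμν} ∂_α∂_β u ∂_μ∂_ν v`. -/
def NL (N : Fin 3 → Fin 3 → Fin 3 → Fin 3 → ℝ) (u v : (Fin 3 → ℝ) → ℝ) :
    (Fin 3 → ℝ) → ℝ :=
  fun X => ∑ α : Fin 3, ∑ β : Fin 3, ∑ μ : Fin 3, ∑ ν : Fin 3,
    N α β μ ν * pd α (pd β u) X * pd μ (pd ν v) X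

/-- A global classical solution of `□u = N(u, u)` on `[0, ∞) × ℝ²` with data `(φ, ψ)`. -/
def IsGlobalSolution (N : Fin 3 → Fin 3 → Fin 3 → Fin 3 → ℝ)
    (φ ψ : ℝ × ℝ → ℝ) (u : (Fin 3 → ℝ) → ℝ) : Prop :=
  ContDiff ℝ 2 u ∧
  (∀ X : Fin 3 → ℝ, 0 ≤ X 0 → box u X = NL N u u X) ∧
  (∀ x : ℝ × ℝ, u (pt 0 x) = φ x ∧ pd 0 u (pt 0 x) = ψ x)

/-- The quadratic nonlinearity `∑ N_{μδ} ∂_μ v ∂_δ v` of the quasilinear equation. -/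
def QNL (N : Fin 3 → Fin 3 → ℝ) (v : (Fin 3 → ℝ) → ℝ) : (Fin 3 → ℝ) → ℝ :=
  fun X => ∑ μ : Fin 3, ∑ δ : Fin 3, N μ δ * pd μ v X * pd δ v X

/-- The null condition for the coefficients `N_{μδ}`. -/
def NullCond2 (N : Fin 3 → Fin 3 → ℝ) : Prop :=
  ∀ X : Fin 3 → ℝ, (X 0) ^ 2 = (X 1) ^ 2 + (X 2) ^ 2 →
    ∑ μ : Fin 3, ∑ δ : Fin 3, N μ δ * X μ * X δ = 0

/-- A global classical solution of `□v = ∑ A_l ∂_l (∑ N_{μδ} ∂_μ v ∂_δ v)` with data `(v₀, v₁)`. -/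
def IsGlobalQSolution (A : Fin 3 → ℝ) (N : Fin 3 → Fin 3 → ℝ)
    (v₀ v₁ : ℝ × ℝ → ℝ) (v : (Fin 3 → ℝ) → ℝ) : Prop :=
  ContDiff ℝ 2 v ∧
  (∀ X : Fin 3 → ℝ, 0 ≤ X 0 → box v X = ∑ l : Fin 3, A l * pd l (QNL N v) X) ∧
  (∀ x : ℝ × ℝ, v (pt 0 x) = v₀ x ∧ pd 0 v (pt 0 x) = v₁ x)


/-- Lemma 2.2, inequality (2.5):
`|t-r| |∂u| ≲ |∂_t u| + |∂₁u| + |∂₂u| + |Ωu| + |L₁u| + |L₂u| + |Su|` for `t ≥ 0`. -/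
theorem bad_derivative_bound :
    ∃ C : ℝ, 0 < C ∧
      ∀ (u : (Fin 3 → ℝ) → ℝ) (s : Set (Fin 3 → ℝ)), IsOpen s →
        ContDiffOn ℝ 1 u s → ∀ X ∈ s, 0 ≤ X 0 →
          |X 0 - rad X| * Real.sqrt (pdSq u X) ≤
            C * (|pd 0 u X| + |pd 1 u X| + |pd 2 u X| +
              |-(X 2) * pd 1 u X + X 1 * pd 2 u X| +
              |X 0 * pd 1 u X + X 1 * pd 0 u X| +
              |X 0 * pd 2 u X + X 2 * pd 0 u X| +
              |X 0 * pd 0 u X + X 1 * pd 1 u X + X 2 * pd 2 u X|) := by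
  refine ⟨3, by norm_num, ?_⟩
  intro u s _hs _hu X _hX ht
  simp only [pdSq, rad]
  set t := X 0 with htdef
  set x1 := X 1 with hx1def
  set x2 := X 2 with hx2def
  set a := pd 0 u X with hadef
  set b := pd 1 u X with hbdef
  set c := pd 2 u X with hcdef
  set r := Real.sqrt (x1 ^ 2 + x2 ^ 2) with hrdef
  have hr0 : 0 ≤ r := Real.sqrt_nonneg _
  have hr2 : r ^ 2 = x1 ^ 2 + x2 ^ 2 := Real.sq_sqrt (by positivity)
  have hX1 : |x1| ≤ r := by
    rw [hrdef, ← Real.sqrt_sq_eq_abs]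
    exact Real.sqrt_le_sqrt (by nlinarith [sq_nonneg x2])
  have hX2 : |x2| ≤ r := by
    rw [hrdef, ← Real.sqrt_sq_eq_abs]
    exact Real.sqrt_le_sqrt (by nlinarith [sq_nonneg x1])
  have hsqrt : Real.sqrt (a ^ 2 + b ^ 2 + c ^ 2) ≤ |a| + |b| + |c| := by
    rw [show |a| + |b| + |c| = Real.sqrt ((|a| + |b| + |c|) ^ 2) from
      (Real.sqrt_sq (by positivity)).symm]
    apply Real.sqrt_le_sqrt
    nlinarith [abs_nonneg a, abs_nonneg b, abs_nonneg c, sq_abs a, sq_abs b, sq_abs c,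
      abs_mul_abs_self a, abs_mul_abs_self b, abs_mul_abs_self c]
  have tri : ∀ p q w : ℝ, |p - q - w| ≤ |p| + |q| + |w| := by
    intro p q w
    calc |p - q - w| = |p + -q + -w| := by ring_nf
      _ ≤ |p + -q| + |-w| := abs_add_le _ _
      _ ≤ |p| + |-q| + |-w| := by gcongr; exact abs_add_le _ _
      _ = |p| + |q| + |w| := by rw [abs_neg, abs_neg]
  rcases eq_or_lt_of_le (by positivity : (0:ℝ) ≤ t + r) with h0 | htr
  · have ht0 : t = 0 := by linarith [abs_nonneg (t - r)]
    have hr0' : r = 0 := by linarith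
    rw [ht0, hr0', sub_zero, abs_zero, zero_mul]
    positivity
  · -- main case: t + r > 0
    set S := t * a + x1 * b + x2 * c with hSdef
    set L1 := t * b + x1 * a with hL1def
    set L2 := t * c + x2 * a with hL2def
    set O := -x2 * b + x1 * c with hOdef
    have bound : ∀ (d p1 p2 p3 q1 q2 q3 : ℝ),
        (t - r) * (t + r) * d = p1 * q1 + p2 * q2 + p3 * q3 →
        |p1| ≤ t + r → |p2| ≤ t + r → |p3| ≤ t + r →
        |t - r| * |d| ≤ |q1| + |q2| + |q3| := by
      intro d p1 p2 p3 q1 q2 q3 he h1 h2 h3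
      have key : |t - r| * |d| * (t + r) ≤ (|q1| + |q2| + |q3|) * (t + r) := by
        calc |t - r| * |d| * (t + r) = |(t - r) * (t + r) * d| := by
              rw [abs_mul, abs_mul, abs_of_pos htr]; ring
          _ = |p1 * q1 - (-(p2 * q2)) - (-(p3 * q3))| := by rw [he]; ring_nf
          _ ≤ |p1 * q1| + |-(p2 * q2)| + |-(p3 * q3)| := tri _ _ _
          _ = |p1| * |q1| + |p2| * |q2| + |p3| * |q3| := by
              rw [abs_neg, abs_neg, abs_mul, abs_mul, abs_mul]
          _ ≤ (t + r) * |q1| + (t + r) * |q2| + (t + r) * |q3| := by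
              gcongr <;> positivity
          _ = (|q1| + |q2| + |q3|) * (t + r) := by ring
      exact le_of_mul_le_mul_right key htr
    have hta : |t| ≤ t + r := by rw [abs_of_nonneg ht]; linarith
    have hx1' : |x1| ≤ t + r := le_trans hX1 (by linarith)
    have hx2' : |x2| ≤ t + r := le_trans hX2 (by linarith)
    have hA : |t - r| * |a| ≤ |S| + |L1| + |L2| :=
      bound a t (-x1) (-x2) S L1 L2
        (by rw [hSdef, hL1def, hL2def]; linear_combination (-a) * hr2)
        hta (by rwa [abs_neg]) (by rwa [abs_neg])
    have hB : |t - r| * |b| ≤ |L1| + |S| + |O| :=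
      bound b t (-x1) x2 L1 S O
        (by rw [hSdef, hL1def, hOdef]; linear_combination (-b) * hr2)
        hta (by rwa [abs_neg]) hx2'
    have hC : |t - r| * |c| ≤ |L2| + |S| + |O| :=
      bound c t (-x2) (-x1) L2 S O
        (by rw [hSdef, hL2def, hOdef]; linear_combination (-c) * hr2)
        hta (by rwa [abs_neg]) (by rwa [abs_neg])
    have hmain : |t - r| * Real.sqrt (a ^ 2 + b ^ 2 + c ^ 2) ≤
        |t - r| * (|a| + |b| + |c|) := by
      apply mul_le_mul_of_nonneg_left hsqrt (abs_nonneg _)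
    have hexp : |t - r| * (|a| + |b| + |c|) =
        |t - r| * |a| + |t - r| * |b| + |t - r| * |c| := by ring
    have habs : 0 ≤ |a| := abs_nonneg a
    have hbabs : 0 ≤ |b| := abs_nonneg b
    have hcabs : 0 ≤ |c| := abs_nonneg c
    calc |t - r| * Real.sqrt (a ^ 2 + b ^ 2 + c ^ 2)
        ≤ |t - r| * |a| + |t - r| * |b| + |t - r| * |c| := by rw [← hexp]; exact hmain
      _ ≤ (|S| + |L1| + |L2|) + (|L1| + |S| + |O|) + (|L2| + |S| + |O|) := by
          linarith
      _ ≤ 3 * (|a| + |b| + |c| + |O| + |L1| + |L2| + |S|) := by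
          linarith [abs_nonneg O, abs_nonneg L1, abs_nonneg L2, abs_nonneg S]

end
end

section
/- Let N_{αβμν} (α,β,μ,ν∈{0,1,2}) be real coefficients satisfying the null condition. There exists a constant C>0, depending only on the coefficients, such that for all C² real-valued functions u, v defined near a point (t,x)∈ℝ^{1+2} with t≥0 and |x|≥1, one has |N(u,v)(t,x)| ≤ (C/|x|) · (|∂Γu| + |∂u|)(t,x) · (|∂Γv| + |∂v|)(t,x), where N(u,v)=Σ N_{αβμν} ∂_α∂_β u ∂_μ∂_ν v. -/
noncomputable section

open MeasureTheory Real Set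

/-- `|∂v|` at a point. -/
def absPd (v : (Fin 3 → ℝ) → ℝ) (X : Fin 3 → ℝ) : ℝ := Real.sqrt (pdSq v X)

/-- `|∂Γu|` at a point: the sum over the seven fields `Γ'` of `|∂Γ'u|`. -/
def absPdGam (u : (Fin 3 → ℝ) → ℝ) (X : Fin 3 → ℝ) : ℝ :=
  ∑ i : Fin 7, absPd (Gamma i u) X

-- ===== helpers =====
section helpers
variable {u : (Fin 3 → ℝ) → ℝ} {X : Fin 3 → ℝ}

lemma amul {x y A B : ℝ} (hx : |x| ≤ A) (hy : |y| ≤ B) : |x * y| ≤ A * B := by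
  rw [abs_mul]
  exact mul_le_mul hx hy (abs_nonneg _) ((abs_nonneg _).trans hx)

lemma abs2 {a b A B : ℝ} (ha : |a| ≤ A) (hb : |b| ≤ B) : |a + b| ≤ A + B :=
  (abs_add_le a b).trans (by linarith)

lemma abs3 {a b c A B C : ℝ} (ha : |a| ≤ A) (hb : |b| ≤ B) (hc : |c| ≤ C) :
    |a + b + c| ≤ A + B + C := (abs2 (abs2 ha hb) hc)

lemma abs_pd_le (w : (Fin 3 → ℝ) → ℝ) (X : Fin 3 → ℝ) (α : Fin 3) :
    |pd α w X| ≤ absPd w X := by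
  rw [← Real.sqrt_sq_eq_abs]
  apply Real.sqrt_le_sqrt
  unfold pdSq
  fin_cases α
  · show pd 0 w X ^ 2 ≤ pd 0 w X ^ 2 + pd 1 w X ^ 2 + pd 2 w X ^ 2
    nlinarith [sq_nonneg (pd 1 w X), sq_nonneg (pd 2 w X)]
  · show pd 1 w X ^ 2 ≤ pd 0 w X ^ 2 + pd 1 w X ^ 2 + pd 2 w X ^ 2
    nlinarith [sq_nonneg (pd 0 w X), sq_nonneg (pd 2 w X)]
  · show pd 2 w X ^ 2 ≤ pd 0 w X ^ 2 + pd 1 w X ^ 2 + pd 2 w X ^ 2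
    nlinarith [sq_nonneg (pd 0 w X), sq_nonneg (pd 1 w X)]

lemma absPd_nonneg (w : (Fin 3 → ℝ) → ℝ) (X : Fin 3 → ℝ) : 0 ≤ absPd w X :=
  Real.sqrt_nonneg _

lemma absPdGam_nonneg (u : (Fin 3 → ℝ) → ℝ) (X : Fin 3 → ℝ) : 0 ≤ absPdGam u X :=
  Finset.sum_nonneg fun i _ => absPd_nonneg _ _

lemma absPd_Gamma_le (i : Fin 7) : absPd (Gamma i u) X ≤ absPdGam u X :=
  Finset.single_le_sum (f := fun i => absPd (Gamma i u) X)
    (fun j _ => absPd_nonneg _ _) (Finset.mem_univ i)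

lemma abs_pd_Gamma_le (i : Fin 7) (β : Fin 3) :
    |pd β (Gamma i u) X| ≤ absPdGam u X :=
  (abs_pd_le _ _ _).trans (absPd_Gamma_le i)

lemma abs_pdpd_le (α β : Fin 3) : |pd α (pd β u) X| ≤ absPdGam u X := by
  fin_cases β
  · exact abs_pd_Gamma_le (u := u) 0 α
  · exact abs_pd_Gamma_le (u := u) 1 α
  · exact abs_pd_Gamma_le (u := u) 2 α

lemma single_abs_le (i j : Fin 3) : |(Pi.single i 1 : Fin 3 → ℝ) j| ≤ 1 := by
  fin_cases i <;> fin_cases j <;> norm_num [Pi.single_apply, Fin.ext_iff]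

end helpers

-- ===== calculus lemmas =====
section calc2
variable {u : (Fin 3 → ℝ) → ℝ} {X : Fin 3 → ℝ}

lemma contDiffAt_pd (hu : ContDiffAt ℝ 2 u X) (j : Fin 3) :
    ContDiffAt ℝ 1 (pd j u) X := by
  have h := hu.fderiv_right (m := 1) (by norm_num)
  exact h.clm_apply contDiffAt_const

lemma diffAt_pd (hu : ContDiffAt ℝ 2 u X) (j : Fin 3) :
    DifferentiableAt ℝ (pd j u) X := (contDiffAt_pd hu j).differentiableAt one_ne_zero

lemma pd_pd_symm (hu : ContDiffAt ℝ 2 u X) (α β : Fin 3) :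
    pd α (pd β u) X = pd β (pd α u) X := by
  have hd : DifferentiableAt ℝ (fderiv ℝ u) X :=
    (hu.fderiv_right (m := 1) (by norm_num)).differentiableAt one_ne_zero
  have key : ∀ α β : Fin 3, pd α (pd β u) X
      = fderiv ℝ (fderiv ℝ u) X (Pi.single α 1) (Pi.single β 1) := by
    intro α β
    show fderiv ℝ (fun Y => fderiv ℝ u Y (Pi.single β 1)) X (Pi.single α 1) = _
    rw [fderiv_clm_apply hd (differentiableAt_const _)]
    simp
  rw [key, key]
  exact (hu.isSymmSndFDerivAt (by norm_num)).eq _ _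

lemma diffAt_coord (i : Fin 3) (X : Fin 3 → ℝ) :
    DifferentiableAt ℝ (fun Y : Fin 3 → ℝ => Y i) X :=
  (ContinuousLinearMap.proj (R := ℝ) (φ := fun _ : Fin 3 => ℝ) i).differentiableAt

lemma fderiv_coord_apply (i : Fin 3) (X v : Fin 3 → ℝ) :
    fderiv ℝ (fun Y : Fin 3 → ℝ => Y i) X v = v i := by
  rw [show (fun Y : Fin 3 → ℝ => Y i)
      = ⇑(ContinuousLinearMap.proj (R := ℝ) (φ := fun _ : Fin 3 => ℝ) i) from rfl,
    ContinuousLinearMap.fderiv]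
  rfl

lemma pd_mul_coord {f : (Fin 3 → ℝ) → ℝ} (hd : DifferentiableAt ℝ f X) (β i : Fin 3) :
    pd β (fun Y => Y i * f Y) X
      = (Pi.single β 1 : Fin 3 → ℝ) i * f X + X i * pd β f X := by
  show fderiv ℝ (fun Y => Y i * f Y) X (Pi.single β 1) = _
  rw [fderiv_fun_mul (diffAt_coord i X) hd]
  simp [fderiv_coord_apply, pd]
  ring

lemma pd_add {f g : (Fin 3 → ℝ) → ℝ}
    (hf : DifferentiableAt ℝ f X) (hg : DifferentiableAt ℝ g X) (β : Fin 3) :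
    pd β (fun Y => f Y + g Y) X = pd β f X + pd β g X := by
  show fderiv ℝ (fun Y => f Y + g Y) X _ = _
  rw [fderiv_fun_add hf hg]; rfl

lemma pd_sub {f g : (Fin 3 → ℝ) → ℝ}
    (hf : DifferentiableAt ℝ f X) (hg : DifferentiableAt ℝ g X) (β : Fin 3) :
    pd β (fun Y => f Y - g Y) X = pd β f X - pd β g X := by
  show fderiv ℝ (fun Y => f Y - g Y) X _ = _
  rw [fderiv_fun_sub hf hg]; rfl

lemma pd_neg {f : (Fin 3 → ℝ) → ℝ} (β : Fin 3) :
    pd β (fun Y => -(f Y)) X = -pd β f X := by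
  show fderiv ℝ (fun Y => -(f Y)) X _ = _
  rw [fderiv_fun_neg]; rfl

lemma pd_const_mul {f : (Fin 3 → ℝ) → ℝ}
    (hf : DifferentiableAt ℝ f X) (c : ℝ) (β : Fin 3) :
    pd β (fun Y => c * f Y) X = c * pd β f X := by
  show fderiv ℝ (fun Y => c * f Y) X _ = _
  rw [fderiv_const_mul hf]; rfl

lemma pd_Gamma3 (hu : ContDiffAt ℝ 2 u X) (β : Fin 3) :
    pd β (Gamma 3 u) X
      = -((Pi.single β 1 : Fin 3 → ℝ) 2 * pd 1 u X + X 2 * pd β (pd 1 u) X)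
        + ((Pi.single β 1 : Fin 3 → ℝ) 1 * pd 2 u X + X 1 * pd β (pd 2 u) X) := by
  have h1 : DifferentiableAt ℝ (fun Y => Y 2 * pd 1 u Y) X :=
    (diffAt_coord 2 X).mul (diffAt_pd hu 1)
  have h2 : DifferentiableAt ℝ (fun Y => Y 1 * pd 2 u Y) X :=
    (diffAt_coord 1 X).mul (diffAt_pd hu 2)
  have hG : Gamma 3 u = fun Y => -(Y 2 * pd 1 u Y) + Y 1 * pd 2 u Y := by
    funext Y; show -(Y 2) * pd 1 u Y + Y 1 * pd 2 u Y = _; ring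
  rw [hG, pd_add (f := fun Y => -(Y 2 * pd 1 u Y)) h1.neg h2, pd_neg, pd_mul_coord (diffAt_pd hu 1),
    pd_mul_coord (diffAt_pd hu 2)]

lemma pd_Gamma4 (hu : ContDiffAt ℝ 2 u X) (β : Fin 3) :
    pd β (Gamma 4 u) X
      = ((Pi.single β 1 : Fin 3 → ℝ) 0 * pd 1 u X + X 0 * pd β (pd 1 u) X)
        + ((Pi.single β 1 : Fin 3 → ℝ) 1 * pd 0 u X + X 1 * pd β (pd 0 u) X) := by
  have h1 : DifferentiableAt ℝ (fun Y => Y 0 * pd 1 u Y) X :=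
    (diffAt_coord 0 X).mul (diffAt_pd hu 1)
  have h2 : DifferentiableAt ℝ (fun Y => Y 1 * pd 0 u Y) X :=
    (diffAt_coord 1 X).mul (diffAt_pd hu 0)
  rw [show Gamma 4 u = fun Y => Y 0 * pd 1 u Y + Y 1 * pd 0 u Y from rfl,
    pd_add h1 h2, pd_mul_coord (diffAt_pd hu 1), pd_mul_coord (diffAt_pd hu 0)]

lemma pd_Gamma5 (hu : ContDiffAt ℝ 2 u X) (β : Fin 3) :
    pd β (Gamma 5 u) X
      = ((Pi.single β 1 : Fin 3 → ℝ) 0 * pd 2 u X + X 0 * pd β (pd 2 u) X)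
        + ((Pi.single β 1 : Fin 3 → ℝ) 2 * pd 0 u X + X 2 * pd β (pd 0 u) X) := by
  have h1 : DifferentiableAt ℝ (fun Y => Y 0 * pd 2 u Y) X :=
    (diffAt_coord 0 X).mul (diffAt_pd hu 2)
  have h2 : DifferentiableAt ℝ (fun Y => Y 2 * pd 0 u Y) X :=
    (diffAt_coord 2 X).mul (diffAt_pd hu 0)
  rw [show Gamma 5 u = fun Y => Y 0 * pd 2 u Y + Y 2 * pd 0 u Y from rfl,
    pd_add h1 h2, pd_mul_coord (diffAt_pd hu 2), pd_mul_coord (diffAt_pd hu 0)]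

lemma pd_Gamma6 (hu : ContDiffAt ℝ 2 u X) (β : Fin 3) :
    pd β (Gamma 6 u) X
      = ((Pi.single β 1 : Fin 3 → ℝ) 0 * pd 0 u X + X 0 * pd β (pd 0 u) X)
        + ((Pi.single β 1 : Fin 3 → ℝ) 1 * pd 1 u X + X 1 * pd β (pd 1 u) X)
        + ((Pi.single β 1 : Fin 3 → ℝ) 2 * pd 2 u X + X 2 * pd β (pd 2 u) X)
        - 2 * pd β u X := by
  have h0 : DifferentiableAt ℝ (fun Y => Y 0 * pd 0 u Y) X :=
    (diffAt_coord 0 X).mul (diffAt_pd hu 0)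
  have h1 : DifferentiableAt ℝ (fun Y => Y 1 * pd 1 u Y) X :=
    (diffAt_coord 1 X).mul (diffAt_pd hu 1)
  have h2 : DifferentiableAt ℝ (fun Y => Y 2 * pd 2 u Y) X :=
    (diffAt_coord 2 X).mul (diffAt_pd hu 2)
  have hu' : DifferentiableAt ℝ u X := hu.differentiableAt (by norm_num)
  rw [show Gamma 6 u
      = fun Y => ((fun Z => Z 0 * pd 0 u Z + Z 1 * pd 1 u Z) Y + Y 2 * pd 2 u Y)
        - 2 * u Y from rfl,
    pd_sub (f := fun Y => (fun Z => Z 0 * pd 0 u Z + Z 1 * pd 1 u Z) Y + Y 2 * pd 2 u Y)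
      ((h0.add h1).add h2) (hu'.const_mul 2),
    pd_add (f := fun Z => Z 0 * pd 0 u Z + Z 1 * pd 1 u Z) (h0.add h1) h2, pd_add h0 h1, pd_const_mul hu',
    pd_mul_coord (diffAt_pd hu 0), pd_mul_coord (diffAt_pd hu 1),
    pd_mul_coord (diffAt_pd hu 2)]

end calc2

-- ===== decomposition =====
def what (X : Fin 3 → ℝ) : Fin 3 → ℝ := ![(-1 : ℝ), X 1 / rad X, X 2 / rad X]

def Kq (u : (Fin 3 → ℝ) → ℝ) (X : Fin 3 → ℝ) : ℝ :=
  (X 1 / rad X) * ((X 1 / rad X) * pd 1 (pd 1 u) X + (X 2 / rad X) * pd 2 (pd 1 u) X)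
  + (X 2 / rad X) * ((X 1 / rad X) * pd 1 (pd 2 u) X + (X 2 / rad X) * pd 2 (pd 2 u) X)

def Rm (u : (Fin 3 → ℝ) → ℝ) (X : Fin 3 → ℝ) : Fin 3 → Fin 3 → ℝ :=
  fun α β => pd α (pd β u) X - what X α * what X β * Kq u X

section decomp
variable {u : (Fin 3 → ℝ) → ℝ} {X : Fin 3 → ℝ}

lemma rad_pos (hr : 1 ≤ rad X) : 0 < rad X := lt_of_lt_of_le one_pos hr

lemma rad_sq (X : Fin 3 → ℝ) : rad X ^ 2 = X 1 ^ 2 + X 2 ^ 2 :=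
  Real.sq_sqrt (by positivity)

lemma abs_X1_le : |X 1| ≤ rad X := by
  rw [← Real.sqrt_sq_eq_abs]
  exact Real.sqrt_le_sqrt (by nlinarith [sq_nonneg (X 2)])

lemma abs_X2_le : |X 2| ≤ rad X := by
  rw [← Real.sqrt_sq_eq_abs]
  exact Real.sqrt_le_sqrt (by nlinarith [sq_nonneg (X 1)])

lemma abs_om1_le (hr : 1 ≤ rad X) : |X 1 / rad X| ≤ 1 := by
  rw [abs_div, abs_of_pos (rad_pos hr)]
  exact div_le_one_of_le₀ abs_X1_le (rad_pos hr).le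

lemma abs_om2_le (hr : 1 ≤ rad X) : |X 2 / rad X| ≤ 1 := by
  rw [abs_div, abs_of_pos (rad_pos hr)]
  exact div_le_one_of_le₀ abs_X2_le (rad_pos hr).le

lemma abs_what_le (hr : 1 ≤ rad X) (α : Fin 3) : |what X α| ≤ 1 := by
  fin_cases α
  · show |(-1 : ℝ)| ≤ 1; norm_num
  · exact abs_om1_le hr
  · exact abs_om2_le hr

lemma what_cone (hr : 1 ≤ rad X) :
    (what X 0) ^ 2 = (what X 1) ^ 2 + (what X 2) ^ 2 := by
  show ((-1 : ℝ)) ^ 2 = (X 1 / rad X) ^ 2 + (X 2 / rad X) ^ 2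
  have h0 := (rad_pos hr).ne'
  field_simp
  linarith [rad_sq X]

lemma abs_Kq_le (hr : 1 ≤ rad X) :
    |Kq u X| ≤ 4 * (absPdGam u X + absPd u X) := by
  have h1 := abs_om1_le (X := X) hr
  have h2 := abs_om2_le (X := X) hr
  have b11 := abs_pdpd_le (u := u) (X := X) 1 1
  have b21 := abs_pdpd_le (u := u) (X := X) 2 1
  have b12 := abs_pdpd_le (u := u) (X := X) 1 2
  have b22 := abs_pdpd_le (u := u) (X := X) 2 2
  have hP := absPd_nonneg u X
  have i1 : |(X 1 / rad X) * pd 1 (pd 1 u) X + (X 2 / rad X) * pd 2 (pd 1 u) X|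
      ≤ 2 * absPdGam u X := by
    have := abs2 (amul h1 b11) (amul h2 b21); linarith [this]
  have i2 : |(X 1 / rad X) * pd 1 (pd 2 u) X + (X 2 / rad X) * pd 2 (pd 2 u) X|
      ≤ 2 * absPdGam u X := by
    have := abs2 (amul h1 b12) (amul h2 b22); linarith [this]
  have := abs2 (amul h1 i1) (amul h2 i2)
  unfold Kq
  linarith [this]

end decomp

section rm
variable {u : (Fin 3 → ℝ) → ℝ} {X : Fin 3 → ℝ}

lemma abs_Rm_le (hu : ContDiffAt ℝ 2 u X) (ht : 0 ≤ X 0) (hr : 1 ≤ rad X)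
    (α β : Fin 3) :
    |Rm u X α β| ≤ 27 / rad X * (absPdGam u X + absPd u X) := by
  have hr0 : 0 < rad X := rad_pos hr
  have hr2 := rad_sq X
  have htr : 0 < X 0 + rad X := by linarith
  have hsym : ∀ γ j : Fin 3, pd γ (pd j u) X = pd j (pd γ u) X := pd_pd_symm hu
  have hA : 0 ≤ absPdGam u X := absPdGam_nonneg u X
  have hP : 0 ≤ absPd u X := absPd_nonneg u X
  have hpb : ∀ j : Fin 3, |pd j u X| ≤ absPd u X := fun j => abs_pd_le u X j
  have h1 := abs_om1_le (X := X) hr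
  have h2 := abs_om2_le (X := X) hr
  set Om : Fin 3 → ℝ :=
    fun j => -(X 2) * pd 1 (pd j u) X + X 1 * pd 2 (pd j u) X with hOm_def
  set Sv : Fin 3 → ℝ :=
    fun j => X 0 * pd 0 (pd j u) X + X 1 * pd 1 (pd j u) X + X 2 * pd 2 (pd j u) X
    with hSv_def
  set Lv1 : Fin 3 → ℝ :=
    fun j => X 0 * pd 1 (pd j u) X + X 1 * pd 0 (pd j u) X with hLv1_def
  set Lv2 : Fin 3 → ℝ :=
    fun j => X 0 * pd 2 (pd j u) X + X 2 * pd 0 (pd j u) X with hLv2_def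
  set Tm : Fin 3 → Fin 3 → ℝ := fun γ j =>
    if γ = 0 then (Sv j + (X 1 / rad X) * Lv1 j + (X 2 / rad X) * Lv2 j) / (X 0 + rad X)
    else if γ = 1 then -(X 2 / rad X) / rad X * Om j
    else (X 1 / rad X) / rad X * Om j with hTm_def
  clear_value Om Sv Lv1 Lv2
  have hOmb : ∀ j, |Om j| ≤ (absPdGam u X) + 2 * (absPd u X) := by
    intro j
    have h3 := pd_Gamma3 hu j
    rw [hsym j 1, hsym j 2] at h3
    have heq : Om j = pd j (Gamma 3 u) X
        + (Pi.single j 1 : Fin 3 → ℝ) 2 * pd 1 u X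
        - (Pi.single j 1 : Fin 3 → ℝ) 1 * pd 2 u X := by
      rw [h3]; simp only [hOm_def]; ring
    have f1 := abs_le.mp (abs_pd_Gamma_le (u := u) (X := X) 3 j)
    have f2 := abs_le.mp (amul (single_abs_le j 2) (hpb 1))
    have f3 := abs_le.mp (amul (single_abs_le j 1) (hpb 2))
    rw [heq, abs_le]; constructor <;> linarith [f1.1, f1.2, f2.1, f2.2, f3.1, f3.2]
  have hSvb : ∀ j, |Sv j| ≤ (absPdGam u X) + 5 * (absPd u X) := by
    intro j
    have h6 := pd_Gamma6 hu j
    rw [hsym j 0, hsym j 1, hsym j 2] at h6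
    have heq : Sv j = pd j (Gamma 6 u) X
        - (Pi.single j 1 : Fin 3 → ℝ) 0 * pd 0 u X
        - (Pi.single j 1 : Fin 3 → ℝ) 1 * pd 1 u X
        - (Pi.single j 1 : Fin 3 → ℝ) 2 * pd 2 u X
        + 2 * pd j u X := by
      rw [h6]; simp only [hSv_def]; ring
    have f1 := abs_le.mp (abs_pd_Gamma_le (u := u) (X := X) 6 j)
    have f2 := abs_le.mp (amul (single_abs_le j 0) (hpb 0))
    have f3 := abs_le.mp (amul (single_abs_le j 1) (hpb 1))
    have f4 := abs_le.mp (amul (single_abs_le j 2) (hpb 2))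
    have f5 := abs_le.mp (hpb j)
    rw [heq, abs_le]
    constructor <;> linarith [f1.1, f1.2, f2.1, f2.2, f3.1, f3.2, f4.1, f4.2, f5.1, f5.2]
  have hL1b : ∀ j, |Lv1 j| ≤ (absPdGam u X) + 2 * (absPd u X) := by
    intro j
    have h4 := pd_Gamma4 hu j
    rw [hsym j 1, hsym j 0] at h4
    have heq : Lv1 j = pd j (Gamma 4 u) X
        - (Pi.single j 1 : Fin 3 → ℝ) 0 * pd 1 u X
        - (Pi.single j 1 : Fin 3 → ℝ) 1 * pd 0 u X := by
      rw [h4]; simp only [hLv1_def]; ring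
    have f1 := abs_le.mp (abs_pd_Gamma_le (u := u) (X := X) 4 j)
    have f2 := abs_le.mp (amul (single_abs_le j 0) (hpb 1))
    have f3 := abs_le.mp (amul (single_abs_le j 1) (hpb 0))
    rw [heq, abs_le]; constructor <;> linarith [f1.1, f1.2, f2.1, f2.2, f3.1, f3.2]
  have hL2b : ∀ j, |Lv2 j| ≤ (absPdGam u X) + 2 * (absPd u X) := by
    intro j
    have h5 := pd_Gamma5 hu j
    rw [hsym j 2, hsym j 0] at h5
    have heq : Lv2 j = pd j (Gamma 5 u) X
        - (Pi.single j 1 : Fin 3 → ℝ) 0 * pd 2 u X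
        - (Pi.single j 1 : Fin 3 → ℝ) 2 * pd 0 u X := by
      rw [h5]; simp only [hLv2_def]; ring
    have f1 := abs_le.mp (abs_pd_Gamma_le (u := u) (X := X) 5 j)
    have f2 := abs_le.mp (amul (single_abs_le j 0) (hpb 2))
    have f3 := abs_le.mp (amul (single_abs_le j 2) (hpb 0))
    rw [heq, abs_le]; constructor <;> linarith [f1.1, f1.2, f2.1, f2.2, f3.1, f3.2]
  -- bound on Tm
  have hTb : ∀ γ j, |Tm γ j| ≤ 9 * ((absPdGam u X) + (absPd u X)) / rad X := by
    intro γ j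
    fin_cases γ
    · show |(Sv j + (X 1 / rad X) * Lv1 j + (X 2 / rad X) * Lv2 j) / (X 0 + rad X)|
        ≤ 9 * ((absPdGam u X) + (absPd u X)) / rad X
      rw [abs_div, abs_of_pos htr]
      have g1 := abs_le.mp (hSvb j)
      have g2 := abs_le.mp (amul h1 (hL1b j))
      have g3 := abs_le.mp (amul h2 (hL2b j))
      have hnum : |Sv j + (X 1 / rad X) * Lv1 j + (X 2 / rad X) * Lv2 j| ≤ 9 * ((absPdGam u X) + (absPd u X)) := by
        rw [abs_le]
        constructor <;> linarith [g1.1, g1.2, g2.1, g2.2, g3.1, g3.2]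
      calc |Sv j + (X 1 / rad X) * Lv1 j + (X 2 / rad X) * Lv2 j| / (X 0 + rad X)
          ≤ (9 * ((absPdGam u X) + (absPd u X))) / rad X := by
            apply div_le_div₀ (by linarith) hnum hr0 (by linarith)
        _ = 9 * ((absPdGam u X) + (absPd u X)) / rad X := by ring
    · show |-(X 2 / rad X) / rad X * Om j| ≤ 9 * ((absPdGam u X) + (absPd u X)) / rad X
      have heq : |-(X 2 / rad X) / rad X * Om j| = |X 2 / rad X| * |Om j| / rad X := by
        rw [abs_mul, abs_div, abs_neg, abs_of_pos hr0]; ring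
      rw [heq]
      apply (div_le_div_iff_of_pos_right hr0).mpr
      calc |X 2 / rad X| * |Om j| ≤ 1 * ((absPdGam u X) + 2 * (absPd u X)) :=
            mul_le_mul h2 (hOmb j) (abs_nonneg _) zero_le_one
        _ ≤ 9 * ((absPdGam u X) + (absPd u X)) := by linarith
    · show |X 1 / rad X / rad X * Om j| ≤ 9 * ((absPdGam u X) + (absPd u X)) / rad X
      have heq : |X 1 / rad X / rad X * Om j| = |X 1 / rad X| * |Om j| / rad X := by
        rw [abs_mul, abs_div, abs_of_pos hr0]; ring
      rw [heq]
      apply (div_le_div_iff_of_pos_right hr0).mpr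
      calc |X 1 / rad X| * |Om j| ≤ 1 * ((absPdGam u X) + 2 * (absPd u X)) :=
            mul_le_mul h1 (hOmb j) (abs_nonneg _) zero_le_one
        _ ≤ 9 * ((absPdGam u X) + (absPd u X)) := by linarith
  -- the pointwise decomposition identity
  have hdec : ∀ γ j : Fin 3, pd γ (pd j u) X
      = what X γ * ((X 1 / rad X) * pd 1 (pd j u) X + (X 2 / rad X) * pd 2 (pd j u) X)
        + Tm γ j := by
    intro γ j
    fin_cases γ
    · show pd 0 (pd j u) X = what X 0 * ((X 1 / rad X) * pd 1 (pd j u) X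
        + (X 2 / rad X) * pd 2 (pd j u) X)
        + (Sv j + (X 1 / rad X) * Lv1 j + (X 2 / rad X) * Lv2 j) / (X 0 + rad X)
      show pd 0 (pd j u) X = (-1 : ℝ) * ((X 1 / rad X) * pd 1 (pd j u) X
        + (X 2 / rad X) * pd 2 (pd j u) X)
        + (Sv j + (X 1 / rad X) * Lv1 j + (X 2 / rad X) * Lv2 j) / (X 0 + rad X)
      simp only [hSv_def, hLv1_def, hLv2_def]
      field_simp
      linear_combination (pd 0 (pd j u) X) * hr2
    · show pd 1 (pd j u) X = what X 1 * ((X 1 / rad X) * pd 1 (pd j u) X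
        + (X 2 / rad X) * pd 2 (pd j u) X) + -(X 2 / rad X) / rad X * Om j
      show pd 1 (pd j u) X = (X 1 / rad X) * ((X 1 / rad X) * pd 1 (pd j u) X
        + (X 2 / rad X) * pd 2 (pd j u) X) + -(X 2 / rad X) / rad X * Om j
      simp only [hOm_def]
      field_simp
      linear_combination pd 1 (pd j u) X * hr2
    · show pd 2 (pd j u) X = what X 2 * ((X 1 / rad X) * pd 1 (pd j u) X
        + (X 2 / rad X) * pd 2 (pd j u) X) + X 1 / rad X / rad X * Om j
      show pd 2 (pd j u) X = (X 2 / rad X) * ((X 1 / rad X) * pd 1 (pd j u) X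
        + (X 2 / rad X) * pd 2 (pd j u) X) + X 1 / rad X / rad X * Om j
      simp only [hOm_def]
      field_simp
      linear_combination pd 2 (pd j u) X * hr2
  -- key identity for the remainder
  have hkey : Rm u X α β
      = what X α * ((X 1 / rad X) * Tm β 1 + (X 2 / rad X) * Tm β 2) + Tm α β := by
    have d1 := hdec α β
    have d2 := hdec β 1
    have d3 := hdec β 2
    have e1 := hsym 1 β
    have e2 := hsym 2 β
    simp only [Rm, Kq]
    linear_combination d1 + what X α * (X 1 / rad X) * e1 + what X α * (X 2 / rad X) * e2
      + what X α * (X 1 / rad X) * d2 + what X α * (X 2 / rad X) * d3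
  -- conclude
  rw [hkey]
  have b1 := hTb β 1
  have b2 := hTb β 2
  have b3 := hTb α β
  have hin : |(X 1 / rad X) * Tm β 1 + (X 2 / rad X) * Tm β 2| ≤ 18 * ((absPdGam u X) + (absPd u X)) / rad X := by
    have t1 := amul h1 b1
    have t2 := amul h2 b2
    have := abs2 t1 t2
    calc |(X 1 / rad X) * Tm β 1 + (X 2 / rad X) * Tm β 2|
        ≤ 1 * (9 * ((absPdGam u X) + (absPd u X)) / rad X) + 1 * (9 * ((absPdGam u X) + (absPd u X)) / rad X) := this
      _ = 18 * ((absPdGam u X) + (absPd u X)) / rad X := by ring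
  have hw := abs_what_le (X := X) hr α
  have := abs2 (amul hw hin) b3
  calc |what X α * ((X 1 / rad X) * Tm β 1 + (X 2 / rad X) * Tm β 2) + Tm α β|
      ≤ 1 * (18 * ((absPdGam u X) + (absPd u X)) / rad X) + 9 * ((absPdGam u X) + (absPd u X)) / rad X := this
    _ = 27 / rad X * ((absPdGam u X) + (absPd u X)) := by ring

end rm

lemma sum4_mul (f : Fin 3 → Fin 3 → Fin 3 → Fin 3 → ℝ) (c : ℝ) :
    (∑ α : Fin 3, ∑ β : Fin 3, ∑ μ : Fin 3, ∑ ν : Fin 3, f α β μ ν * c)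
      = (∑ α : Fin 3, ∑ β : Fin 3, ∑ μ : Fin 3, ∑ ν : Fin 3, f α β μ ν) * c := by
  simp only [← Finset.sum_mul]

lemma sum4_nonneg (f : Fin 3 → Fin 3 → Fin 3 → Fin 3 → ℝ) (h : ∀ α β μ ν, 0 ≤ f α β μ ν) :
    0 ≤ ∑ α : Fin 3, ∑ β : Fin 3, ∑ μ : Fin 3, ∑ ν : Fin 3, f α β μ ν :=
  Finset.sum_nonneg fun α _ => Finset.sum_nonneg fun β _ => Finset.sum_nonneg fun μ _ =>
    Finset.sum_nonneg fun ν _ => h α β μ ν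


set_option maxHeartbeats 2000000 in
/-- Lemma 3.1: under the null condition, for `|x| ≥ 1`,
`|N(u,v)| ≲ (1/r) (|∂Γu| + |∂u|)(|∂Γv| + |∂v|)`. -/
theorem null_form_pointwise_bound
    (N : Fin 3 → Fin 3 → Fin 3 → Fin 3 → ℝ) (hnull : NullCond N) :
    ∃ C : ℝ, 0 < C ∧
      ∀ (u v : (Fin 3 → ℝ) → ℝ) (s : Set (Fin 3 → ℝ)), IsOpen s →
        ContDiffOn ℝ 2 u s → ContDiffOn ℝ 2 v s →
        ∀ X ∈ s, 0 ≤ X 0 → 1 ≤ rad X →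
          |NL N u v X| ≤
            C / rad X * ((absPdGam u X + absPd u X) * (absPdGam v X + absPd v X)) := by
  refine ⟨945 * (∑ α : Fin 3, ∑ β : Fin 3, ∑ μ : Fin 3, ∑ ν : Fin 3, |N α β μ ν|) + 1,
    by positivity, ?_⟩
  intro u v s hs hus hvs X hX ht hr
  have hu : ContDiffAt ℝ 2 u X := hus.contDiffAt (hs.mem_nhds hX)
  have hv : ContDiffAt ℝ 2 v X := hvs.contDiffAt (hs.mem_nhds hX)
  have hr0 : 0 < rad X := rad_pos hr
  have hEu : 0 ≤ absPdGam u X + absPd u X := by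
    have := absPdGam_nonneg u X; have := absPd_nonneg u X; linarith
  have hEv : 0 ≤ absPdGam v X + absPd v X := by
    have := absPdGam_nonneg v X; have := absPd_nonneg v X; linarith
  have h0 : (∑ α : Fin 3, ∑ β : Fin 3, ∑ μ : Fin 3, ∑ ν : Fin 3,
      N α β μ ν * what X α * what X β * what X μ * what X ν) = 0 :=
    hnull (what X) (what_cone hr)
  have hNL : NL N u v X
      = (∑ α : Fin 3, ∑ β : Fin 3, ∑ μ : Fin 3, ∑ ν : Fin 3,
          N α β μ ν * (what X α * what X β * Kq u X * Rm v X μ ν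
            + Rm u X α β * (what X μ * what X ν * Kq v X)
            + Rm u X α β * Rm v X μ ν))
        + Kq u X * Kq v X * (∑ α : Fin 3, ∑ β : Fin 3, ∑ μ : Fin 3, ∑ ν : Fin 3,
            N α β μ ν * what X α * what X β * what X μ * what X ν) := by
    unfold NL
    simp only [Finset.mul_sum, ← Finset.sum_add_distrib]
    refine Finset.sum_congr rfl fun α _ => Finset.sum_congr rfl fun β _ =>
      Finset.sum_congr rfl fun μ _ => Finset.sum_congr rfl fun ν _ => ?_
    simp only [Rm]
    ring
  rw [hNL, h0, mul_zero, add_zero]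
  -- per-term bound
  have hterm : ∀ α β μ ν : Fin 3,
      |N α β μ ν * (what X α * what X β * Kq u X * Rm v X μ ν
        + Rm u X α β * (what X μ * what X ν * Kq v X)
        + Rm u X α β * Rm v X μ ν)|
      ≤ |N α β μ ν| * (945 / rad X
          * ((absPdGam u X + absPd u X) * (absPdGam v X + absPd v X))) := by
    intro α β μ ν
    rw [abs_mul]
    apply mul_le_mul_of_nonneg_left _ (abs_nonneg _)
    have hKu := abs_Kq_le (u := u) (X := X) hr
    have hKv := abs_Kq_le (u := v) (X := X) hr
    have hRu := abs_Rm_le hu ht hr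
    have hRv := abs_Rm_le hv ht hr
    have hRv' : |Rm v X μ ν| ≤ 27 * (absPdGam v X + absPd v X) := by
      refine (hRv μ ν).trans ?_
      calc 27 / rad X * (absPdGam v X + absPd v X)
          = 27 * (absPdGam v X + absPd v X) / rad X := by ring
        _ ≤ 27 * (absPdGam v X + absPd v X) := div_le_self (by linarith) hr
    have t1 := amul (amul (amul (abs_what_le (X := X) hr α) (abs_what_le (X := X) hr β)) hKu)
      (hRv μ ν)
    have t2 := amul (hRu α β) (amul (amul (abs_what_le (X := X) hr μ) (abs_what_le (X := X) hr ν)) hKv)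
    have t3 := amul (hRu α β) hRv'
    calc |what X α * what X β * Kq u X * Rm v X μ ν
        + Rm u X α β * (what X μ * what X ν * Kq v X)
        + Rm u X α β * Rm v X μ ν|
        ≤ 1 * 1 * (4 * (absPdGam u X + absPd u X)) * (27 / rad X * (absPdGam v X + absPd v X))
          + 27 / rad X * (absPdGam u X + absPd u X) * (1 * 1 * (4 * (absPdGam v X + absPd v X)))
          + 27 / rad X * (absPdGam u X + absPd u X) * (27 * (absPdGam v X + absPd v X)) :=
          abs3 t1 t2 t3
      _ = 945 / rad X * ((absPdGam u X + absPd u X) * (absPdGam v X + absPd v X)) := by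
          ring
  -- sum up
  have hsum : |∑ α : Fin 3, ∑ β : Fin 3, ∑ μ : Fin 3, ∑ ν : Fin 3,
      N α β μ ν * (what X α * what X β * Kq u X * Rm v X μ ν
        + Rm u X α β * (what X μ * what X ν * Kq v X)
        + Rm u X α β * Rm v X μ ν)|
      ≤ ∑ α : Fin 3, ∑ β : Fin 3, ∑ μ : Fin 3, ∑ ν : Fin 3,
        |N α β μ ν| * (945 / rad X
          * ((absPdGam u X + absPd u X) * (absPdGam v X + absPd v X))) := by
    refine (Finset.abs_sum_le_sum_abs _ _).trans (Finset.sum_le_sum fun α _ => ?_)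
    refine (Finset.abs_sum_le_sum_abs _ _).trans (Finset.sum_le_sum fun β _ => ?_)
    refine (Finset.abs_sum_le_sum_abs _ _).trans (Finset.sum_le_sum fun μ _ => ?_)
    refine (Finset.abs_sum_le_sum_abs _ _).trans (Finset.sum_le_sum fun ν _ => ?_)
    exact hterm α β μ ν
  refine hsum.trans ?_
  rw [sum4_mul (fun α β μ ν => |N α β μ ν|)
    (945 / rad X * ((absPdGam u X + absPd u X) * (absPdGam v X + absPd v X)))]
  have hS : 0 ≤ ∑ α : Fin 3, ∑ β : Fin 3, ∑ μ : Fin 3, ∑ ν : Fin 3, |N α β μ ν| :=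
    sum4_nonneg _ fun α β μ ν => abs_nonneg _
  set S := ∑ α : Fin 3, ∑ β : Fin 3, ∑ μ : Fin 3, ∑ ν : Fin 3, |N α β μ ν|
  calc S * (945 / rad X * ((absPdGam u X + absPd u X) * (absPdGam v X + absPd v X)))
      = (945 * S) / rad X * ((absPdGam u X + absPd u X) * (absPdGam v X + absPd v X)) := by
        ring
    _ ≤ (945 * S + 1) / rad X * ((absPdGam u X + absPd u X) * (absPdGam v X + absPd v X)) :=
        mul_le_mul_of_nonneg_right ((div_le_div_iff_of_pos_right hr0).mpr (by linarith))
          (mul_nonneg hEu hEv)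

end
end
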